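/- Let T be an ergodic automorphism of a standard probability space (X,d,μ) with X a compact metric space, φ: X → G ⊆ R^ℓ an integrable Borel cocycle with zero mean. Suppose (q_n) is an increasing sequence of naturals and (C_n) Borel sets with μ(C_n) → α > 0, μ(C_n △ T^{-1}C_n) → 0, sup_{x∈C_n} d(x, T^{q_n}x) → 0, and φ^{(q_n)}(x) = g_n for all x ∈ C_n with g_n → g in G. Then g ∈ E(φ). -/

import Mathlib

open MeasureTheory Filter
open scoped ENNReal

/-- The `n`-th iterate (with `n : ℤ`) of a measurable automorphism `T`. -/
noncomputable def iterZ {X : Type*} [MeasurableSpace X] (T : X ≃ᵐ X) (n : ℤ) : X → X :=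
  if 0 ≤ n then (⇑T)^[n.toNat] else (⇑T.symm)^[(-n).toNat]

/-- The Birkhoff cocycle `φ^{(n)}` (with `n : ℤ`) of `φ` over the automorphism `T`. -/
noncomputable def birkhoffZ {X : Type*} [MeasurableSpace X] {G : Type*} [AddCommGroup G]
    (T : X ≃ᵐ X) (φ : X → G) (n : ℤ) (x : X) : G :=
  if 0 ≤ n then ∑ j ∈ Finset.range n.toNat, φ ((⇑T)^[j] x)
  else -∑ j ∈ Finset.range (-n).toNat, φ ((⇑T.symm)^[j + 1] x)

/-- `g` is a (finite) essential value of the cocycle `φ` for `T`. -/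
def IsEssentialValue {X : Type*} [MeasurableSpace X] {G : Type*} [AddCommGroup G]
    [TopologicalSpace G] (μ : Measure X) (T : X ≃ᵐ X) (φ : X → G) (g : G) : Prop :=
  ∀ V ∈ nhds g, ∀ B : Set X, MeasurableSet B → 0 < μ B →
    ∃ n : ℤ, 0 < μ (B ∩ iterZ T n ⁻¹' B ∩ {x | birkhoffZ T φ n x ∈ V})

/-- Estimate for the symmetric difference of a set with its preimage under an iterate. -/
lemma symmDiff_iterate_le {X : Type*} [MeasurableSpace X] {μ : Measure X}
    {T : X → X} (hT : MeasurePreserving T μ μ) {C : Set X} (hC : MeasurableSet C) (k : ℕ) :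
    μ (symmDiff C (T^[k] ⁻¹' C)) ≤ k • μ (symmDiff C (T ⁻¹' C)) := by
  induction k with
  | zero => simp
  | succ k ih =>
    have h1 : (T^[k + 1]) ⁻¹' C = T^[k] ⁻¹' (T ⁻¹' C) := by
      rw [Function.iterate_succ']; rfl
    have h2 : symmDiff C (T^[k + 1] ⁻¹' C)
        ⊆ symmDiff C (T^[k] ⁻¹' C) ∪ symmDiff (T^[k] ⁻¹' C) (T^[k + 1] ⁻¹' C) :=
      symmDiff_triangle _ _ _
    have h3 : μ (symmDiff (T^[k] ⁻¹' C) (T^[k + 1] ⁻¹' C)) = μ (symmDiff C (T ⁻¹' C)) := by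
      rw [h1, ← Set.preimage_symmDiff]
      exact (hT.iterate k).measure_preimage
        ((hC.symmDiff (hC.preimage hT.measurable)).nullMeasurableSet)
    calc μ (symmDiff C (T^[k + 1] ⁻¹' C))
        ≤ μ (symmDiff C (T^[k] ⁻¹' C) ∪ symmDiff (T^[k] ⁻¹' C) (T^[k + 1] ⁻¹' C)) :=
          measure_mono h2
      _ ≤ μ (symmDiff C (T^[k] ⁻¹' C)) + μ (symmDiff (T^[k] ⁻¹' C) (T^[k + 1] ⁻¹' C)) :=
          measure_union_le _ _
      _ ≤ k • μ (symmDiff C (T ⁻¹' C)) + μ (symmDiff C (T ⁻¹' C)) := by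
          rw [h3]; exact add_le_add_left ih _
      _ = (k + 1) • μ (symmDiff C (T ⁻¹' C)) := (succ_nsmul _ _).symm

/-- Asymptotic lower bound on the intersection of the almost invariant sets `C n` with a
fixed positive measure set `B`. -/
lemma essval_lower_bound {X : Type*} [MeasurableSpace X]
    (μ : Measure X) [IsProbabilityMeasure μ]
    (T : X ≃ᵐ X) (hT : Ergodic (⇑T) μ)
    (C : ℕ → Set X) (α : ℝ) (hα : 0 < α)
    (hCμ : Tendsto (fun n => (μ (C n)).toReal) atTop (nhds α))
    (hCinv : Tendsto (fun n => μ (symmDiff (C n) (⇑T ⁻¹' C n))) atTop (nhds 0))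
    (hCmeas : ∀ n, MeasurableSet (C n))
    {B : Set X} (hB : MeasurableSet B) (hBpos : 0 < μ B) :
    ∃ δ > (0 : ℝ), ∀ᶠ n in atTop, ENNReal.ofReal δ ≤ μ (C n ∩ B) := by
  classical
  set f : ℕ → Set X := fun k => (⇑T)^[k] ⁻¹' B with hf
  have hfmeas : ∀ k, MeasurableSet (f k) := fun k => hB.preimage (T.measurable.iterate k)
  set U : Set X := ⋃ k, f k with hU
  have hUmeas : MeasurableSet U := MeasurableSet.iUnion hfmeas
  have hBU : B ⊆ U := by
    have : f 0 = B := rfl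
    rw [← this]; exact Set.subset_iUnion f 0
  have hU1 : μ U = 1 := by
    have hTU : ⇑T ⁻¹' U ⊆ U := by
      rw [hU, Set.preimage_iUnion]
      refine Set.iUnion_subset fun k => ?_
      have : ⇑T ⁻¹' f k = f (k + 1) := by
        rw [hf]; simp only [← Set.preimage_comp, ← Function.iterate_succ]
      rw [this]; exact Set.subset_iUnion f (k + 1)
    rcases hT.ae_empty_or_univ_of_preimage_ae_le hUmeas.nullMeasurableSet
        hTU.eventuallyLE with h | h
    · exfalso
      have : μ U = 0 := by simpa using measure_congr h
      exact hBpos.ne' (le_antisymm (this ▸ measure_mono hBU) zero_le)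
    · have : μ U = μ Set.univ := measure_congr h
      simpa using this
  -- choose a finite union with large measure
  have haccum : Tendsto (fun K => μ (Set.accumulate f K)) atTop (nhds 1) := by
    have := tendsto_measure_iUnion_accumulate (μ := μ) (f := f)
    rwa [← hU, hU1] at this
  have hlt : (1 : ℝ≥0∞) - ENNReal.ofReal (α / 4) < 1 :=
    ENNReal.sub_lt_self ENNReal.one_ne_top one_ne_zero
      (ne_of_gt (ENNReal.ofReal_pos.2 (by linarith)))
  obtain ⟨K, hK⟩ := (haccum.eventually (eventually_gt_nhds hlt)).exists
  set W : Set X := Set.accumulate f K with hWdef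
  have hWmeas : MeasurableSet W := by
    rw [hWdef, Set.accumulate_def]
    exact MeasurableSet.biUnion (Set.to_countable _) fun k _ => hfmeas k
  have hWc : μ Wᶜ ≤ ENNReal.ofReal (α / 4) := by
    have h1 : μ Wᶜ = 1 - μ W := prob_compl_eq_one_sub hWmeas
    rw [h1]
    calc (1 : ℝ≥0∞) - μ W ≤ 1 - (1 - ENNReal.ofReal (α / 4)) := tsub_le_tsub_left hK.le 1
      _ ≤ ENNReal.ofReal (α / 4) := tsub_tsub_le
  set K' : ℕ := K + 1 with hK'
  set δ0 : ℝ := α / (2 * K') with hδ0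
  have hδ0pos : 0 < δ0 := by
    rw [hδ0]; positivity
  refine ⟨δ0 / 2, by positivity, ?_⟩
  have hev1 : ∀ᶠ n in atTop, 3 * α / 4 ≤ (μ (C n)).toReal :=
    hCμ.eventually (eventually_ge_nhds (by linarith))
  have hev2 : ∀ᶠ n in atTop,
      μ (symmDiff (C n) (⇑T ⁻¹' C n)) ≤ ENNReal.ofReal (δ0 / (2 * K')) :=
    hCinv.eventually (eventually_le_nhds (ENNReal.ofReal_pos.2 (by positivity)))
  filter_upwards [hev1, hev2] with n hn1 hn2
  -- μ (C n ∩ W) is big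
  have hb : ENNReal.ofReal (α / 2) ≤ μ (C n ∩ W) := by
    have hsub : C n ⊆ (C n ∩ W) ∪ Wᶜ := by
      intro x hx
      by_cases hxW : x ∈ W
      · exact Or.inl ⟨hx, hxW⟩
      · exact Or.inr hxW
    have h1 : ENNReal.ofReal (3 * α / 4) ≤ μ (C n ∩ W) + ENNReal.ofReal (α / 4) :=
      le_trans (ENNReal.ofReal_le_of_le_toReal hn1)
        (le_trans (measure_mono hsub)
          (le_trans (measure_union_le _ _) (add_le_add_right hWc _)))
    have h2 : ENNReal.ofReal (3 * α / 4) - ENNReal.ofReal (α / 4) ≤ μ (C n ∩ W) :=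
      tsub_le_iff_right.2 h1
    calc ENNReal.ofReal (α / 2) = ENNReal.ofReal (3 * α / 4 - α / 4) := by congr 1; ring
      _ = ENNReal.ofReal (3 * α / 4) - ENNReal.ofReal (α / 4) :=
          ENNReal.ofReal_sub _ (by linarith)
      _ ≤ μ (C n ∩ W) := h2
  -- pigeonhole
  have hsum : α / 2 ≤ ∑ k ∈ Finset.range K', (μ (C n ∩ f k)).toReal := by
    have hsub : C n ∩ W ⊆ ⋃ k ∈ Finset.range K', C n ∩ f k := by
      intro x ⟨hxC, hxW⟩
      rw [hWdef, Set.accumulate_def] at hxW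
      obtain ⟨k, hk, hkx⟩ := Set.mem_iUnion₂.1 hxW
      exact Set.mem_iUnion₂.2 ⟨k, Finset.mem_range.2 (Nat.lt_succ_of_le hk), hxC, hkx⟩
    have h1 : μ (C n ∩ W) ≤ ∑ k ∈ Finset.range K', μ (C n ∩ f k) :=
      le_trans (measure_mono hsub) (measure_biUnion_finset_le _ _)
    have h2 : (μ (C n ∩ W)).toReal ≤ ∑ k ∈ Finset.range K', (μ (C n ∩ f k)).toReal := by
      rw [← ENNReal.toReal_sum (fun k _ => measure_ne_top μ _)]
      exact ENNReal.toReal_mono (by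
        exact ENNReal.sum_ne_top.2 fun k _ => measure_ne_top μ _) h1
    refine le_trans ?_ h2
    have := ENNReal.toReal_mono (measure_ne_top μ _) hb
    rwa [ENNReal.toReal_ofReal (by linarith)] at this
  obtain ⟨k, hkmem, hk⟩ := Finset.exists_le_of_sum_le (s := Finset.range K')
      (f := fun _ => δ0) (g := fun k => (μ (C n ∩ f k)).toReal)
      ⟨0, Finset.mem_range.2 (Nat.succ_pos K)⟩
      (by
        rw [Finset.sum_const, Finset.card_range, nsmul_eq_mul]
        calc (K' : ℝ) * δ0 = α / 2 := by
              rw [hδ0]; field_simp [show (K' : ℝ) ≠ 0 by rw [hK']; positivity]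
          _ ≤ _ := hsum)
  -- transfer to C n ∩ B
  have hkK : k < K' := Finset.mem_range.1 hkmem
  have hmain : ENNReal.ofReal δ0 ≤ μ (C n ∩ B) + ENNReal.ofReal (δ0 / 2) := by
    have hg : ENNReal.ofReal δ0 ≤ μ (C n ∩ f k) := ENNReal.ofReal_le_of_le_toReal hk
    have hsub : C n ∩ f k ⊆ ((⇑T)^[k] ⁻¹' (C n ∩ B)) ∪ symmDiff (C n) ((⇑T)^[k] ⁻¹' C n) := by
      intro x ⟨hxC, hxB⟩
      by_cases hx : x ∈ (⇑T)^[k] ⁻¹' C n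
      · exact Or.inl ⟨hx, hxB⟩
      · exact Or.inr (Set.mem_symmDiff.2 (Or.inl ⟨hxC, hx⟩))
    have h1 : μ ((⇑T)^[k] ⁻¹' (C n ∩ B)) = μ (C n ∩ B) :=
      (hT.toMeasurePreserving.iterate k).measure_preimage
        ((hCmeas n).inter hB).nullMeasurableSet
    have h2 : μ (symmDiff (C n) ((⇑T)^[k] ⁻¹' C n)) ≤ ENNReal.ofReal (δ0 / 2) := by
      calc μ (symmDiff (C n) ((⇑T)^[k] ⁻¹' C n))
          ≤ k • μ (symmDiff (C n) (⇑T ⁻¹' C n)) :=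
            symmDiff_iterate_le hT.toMeasurePreserving (hCmeas n) k
        _ ≤ K' • μ (symmDiff (C n) (⇑T ⁻¹' C n)) := by
            rw [nsmul_eq_mul, nsmul_eq_mul]
            exact mul_le_mul_left (by exact_mod_cast Nat.cast_le.2 hkK.le) _
        _ ≤ K' • ENNReal.ofReal (δ0 / (2 * K')) := nsmul_le_nsmul_right hn2 K'
        _ = ENNReal.ofReal (δ0 / 2) := by
            rw [nsmul_eq_mul, ← ENNReal.ofReal_natCast K', ← ENNReal.ofReal_mul (by positivity)]
            congr 1
            field_simp [show (K' : ℝ) ≠ 0 by rw [hK']; positivity]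
    calc ENNReal.ofReal δ0 ≤ μ (C n ∩ f k) := hg
      _ ≤ μ ((⇑T)^[k] ⁻¹' (C n ∩ B)) + μ (symmDiff (C n) ((⇑T)^[k] ⁻¹' C n)) :=
          le_trans (measure_mono hsub) (measure_union_le _ _)
      _ ≤ μ (C n ∩ B) + ENNReal.ofReal (δ0 / 2) := by rw [h1]; exact add_le_add_right h2 _
  have := tsub_le_iff_right.2 hmain
  calc ENNReal.ofReal (δ0 / 2) = ENNReal.ofReal (δ0 - δ0 / 2) := by congr 1; ring
    _ = ENNReal.ofReal δ0 - ENNReal.ofReal (δ0 / 2) := ENNReal.ofReal_sub _ (by positivity)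
    _ ≤ μ (C n ∩ B) := this

theorem stmt18 {X : Type*} [MeasurableSpace X] [MetricSpace X] [CompactSpace X] [BorelSpace X]
    (μ : Measure X) [IsProbabilityMeasure μ]
    (T : X ≃ᵐ X) (hT : Ergodic (⇑T) μ)
    {ℓ : ℕ} (G : AddSubgroup (Fin ℓ → ℝ)) (hG : IsClosed (G : Set (Fin ℓ → ℝ)))
    (φ : X → Fin ℓ → ℝ) (hφmeas : Measurable φ) (hφint : Integrable φ μ)
    (hφG : ∀ x, φ x ∈ G) (hmean : ∫ x, φ x ∂μ = 0)
    (q : ℕ → ℕ) (hq : StrictMono q)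
    (C : ℕ → Set X) (hCmeas : ∀ n, MeasurableSet (C n))
    (α : ℝ) (hα : 0 < α)
    (hCμ : Tendsto (fun n => (μ (C n)).toReal) atTop (nhds α))
    (hCinv : Tendsto (fun n => μ (symmDiff (C n) (⇑T ⁻¹' C n))) atTop (nhds 0))
    (hdist : ∀ ε > (0 : ℝ), ∃ N, ∀ n ≥ N, ∀ x ∈ C n, dist x ((⇑T)^[q n] x) ≤ ε)
    (v : ℕ → Fin ℓ → ℝ) (g : Fin ℓ → ℝ)
    (hv : ∀ n : ℕ, ∀ x ∈ C n, (∑ j ∈ Finset.range (q n), φ ((⇑T)^[j] x)) = v n)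
    (hvg : Tendsto v atTop (nhds g)) :
    IsEssentialValue μ T φ g := by
  intro V hV B hB hBpos
  obtain ⟨δ, hδ, hev⟩ := essval_lower_bound μ T hT C α hα hCμ hCinv hCmeas hB hBpos
  -- regularity: closed subset and open superset of B
  obtain ⟨F, hFB, hFclosed, hFμ⟩ := hB.exists_isClosed_lt_add (measure_ne_top μ B)
    (ne_of_gt (ENNReal.ofReal_pos.2 (by positivity : (0:ℝ) < δ / 8)))
  obtain ⟨U, hBU, hUopen, hUμ⟩ := B.exists_isOpen_lt_add (measure_ne_top μ B)
    (ne_of_gt (ENNReal.ofReal_pos.2 (by positivity : (0:ℝ) < δ / 8)))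
  have hUF : μ (U \ F) ≤ ENNReal.ofReal (δ / 4) := by
    have hsub : U \ F ⊆ (U \ B) ∪ (B \ F) := by
      intro x ⟨hxU, hxF⟩
      by_cases hxB : x ∈ B
      · exact Or.inr ⟨hxB, hxF⟩
      · exact Or.inl ⟨hxU, hxB⟩
    have h1 : μ (U \ B) ≤ ENNReal.ofReal (δ / 8) := by
      rw [measure_diff hBU hB.nullMeasurableSet (measure_ne_top μ B)]
      exact tsub_le_iff_right.2 (by rw [add_comm]; exact hUμ.le)
    have h2 : μ (B \ F) ≤ ENNReal.ofReal (δ / 8) := by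
      rw [measure_diff hFB hFclosed.measurableSet.nullMeasurableSet (measure_ne_top μ F)]
      exact tsub_le_iff_right.2 (by rw [add_comm]; exact hFμ.le)
    calc μ (U \ F) ≤ μ (U \ B) + μ (B \ F) :=
          le_trans (measure_mono hsub) (measure_union_le _ _)
      _ ≤ ENNReal.ofReal (δ / 8) + ENNReal.ofReal (δ / 8) := add_le_add h1 h2
      _ = ENNReal.ofReal (δ / 4) := by
          rw [← ENNReal.ofReal_add (by positivity) (by positivity)]; congr 1; ring
  -- Urysohn function
  have hdisj : Disjoint Uᶜ F := by
    rw [Set.disjoint_left]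
    intro x hxU hxF
    exact hxU (hBU (hFB hxF))
  obtain ⟨f, hf0, hf1, hf01⟩ := exists_continuous_zero_one_of_isClosed
    hUopen.isClosed_compl hFclosed hdisj
  -- the approximation error function
  set h : X → ℝ≥0∞ := fun x => ENNReal.ofReal |f x - B.indicator (fun _ => (1:ℝ)) x| with hh
  have hmeas_h : Measurable h :=
    ENNReal.measurable_ofReal.comp
      ((f.continuous.measurable.sub (measurable_const.indicator hB)).abs)
  have hint : ∫⁻ x, h x ∂μ ≤ ENNReal.ofReal (δ / 4) := by
    have hle : ∀ x, h x ≤ (U \ F).indicator (fun _ => (1:ℝ≥0∞)) x := by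
      intro x
      by_cases hxF : x ∈ F
      · have : f x = 1 := hf1 hxF
        have hxB : x ∈ B := hFB hxF
        simp [hh, this, Set.indicator_of_mem hxB]
      by_cases hxU : x ∈ U
      · have hx : x ∈ U \ F := ⟨hxU, hxF⟩
        rw [Set.indicator_of_mem hx]
        rw [hh]
        simp only
        rw [show ((1:ℝ≥0∞)) = ENNReal.ofReal (1:ℝ) by simp]
        apply ENNReal.ofReal_le_ofReal
        have h1 : 0 ≤ f x := (hf01 x).1
        have h2 : f x ≤ 1 := (hf01 x).2
        by_cases hxB : x ∈ B
        · rw [Set.indicator_of_mem hxB]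
          rw [abs_le]; constructor <;> simp <;> linarith
        · rw [Set.indicator_of_notMem hxB]
          rw [abs_le]; constructor <;> simp <;> linarith
      · have : f x = 0 := hf0 hxU
        have hxB : x ∉ B := fun hc => hxU (hBU hc)
        simp [hh, this, Set.indicator_of_notMem hxB]
    calc ∫⁻ x, h x ∂μ ≤ ∫⁻ x, (U \ F).indicator (fun _ => (1:ℝ≥0∞)) x ∂μ := lintegral_mono hle
      _ = μ (U \ F) := lintegral_indicator_one (hUopen.measurableSet.diff hFclosed.measurableSet)
      _ ≤ ENNReal.ofReal (δ / 4) := hUF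
  -- uniform continuity of f
  obtain ⟨η, hη, hηf⟩ := Metric.uniformContinuous_iff.mp
    (CompactSpace.uniformContinuous_of_continuous f.continuous) (δ / 8) (by positivity)
  obtain ⟨N, hN⟩ := hdist (η / 2) (by positivity)
  -- choose a good index m
  have hvV : ∀ᶠ m in atTop, v m ∈ V := hvg hV
  obtain ⟨m, ⟨hm1, hm2⟩, hm3⟩ := ((hev.and hvV).and (eventually_ge_atTop N)).exists
  set k : ℕ := q m with hk
  set P : Set X := (⇑T)^[k] ⁻¹' B with hP
  set S : Set X := C m ∩ B ∩ Pᶜ with hS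
  have hSmeas : MeasurableSet S :=
    ((hCmeas m).inter hB).inter (hB.preimage (T.measurable.iterate k)).compl
  -- m-th stage uniform closeness of f along the rigidity time
  have hfk : ∀ x ∈ C m, |f x - f ((⇑T)^[k] x)| ≤ δ / 8 := by
    intro x hx
    have := hηf (lt_of_le_of_lt (hN m hm3 x hx) (by linarith))
    rw [Real.dist_eq] at this
    exact this.le
  -- pointwise estimate
  have hpt : ∀ x, S.indicator (fun _ => (1:ℝ≥0∞)) x
      ≤ h x + h ((⇑T)^[k] x) + ENNReal.ofReal (δ / 8) := by
    intro x
    by_cases hxS : x ∈ S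
    · obtain ⟨⟨hxC, hxB⟩, hxP⟩ := id hxS
      have hTxB : (⇑T)^[k] x ∉ B := hxP
      have h1 : 0 ≤ f x := (hf01 x).1
      have h2 : f x ≤ 1 := (hf01 x).2
      have h3 : 0 ≤ f ((⇑T)^[k] x) := (hf01 _).1
      have hhx : h x = ENNReal.ofReal (1 - f x) := by
        simp only [hh, Set.indicator_of_mem hxB]
        rw [abs_sub_comm, abs_of_nonneg (by linarith)]
      have hhTx : h ((⇑T)^[k] x) = ENNReal.ofReal (f ((⇑T)^[k] x)) := by
        simp only [hh, Set.indicator_of_notMem hTxB]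
        rw [sub_zero, abs_of_nonneg h3]
      rw [Set.indicator_of_mem hxS, hhx, hhTx,
        ← ENNReal.ofReal_add (by linarith) h3,
        ← ENNReal.ofReal_add (by linarith) (by positivity),
        show ((1:ℝ≥0∞)) = ENNReal.ofReal (1:ℝ) by simp]
      apply ENNReal.ofReal_le_ofReal
      have := (abs_le.1 (hfk x hxC)).2
      linarith
    · rw [Set.indicator_of_notMem hxS]
      exact zero_le
  -- measure of the bad set S is small
  have hSμ : μ S ≤ ENNReal.ofReal (5 * δ / 8) := by
    have hcomp : ∫⁻ x, h ((⇑T)^[k] x) ∂μ = ∫⁻ x, h x ∂μ :=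
      (hT.toMeasurePreserving.iterate k).lintegral_comp hmeas_h
    calc μ S = ∫⁻ x, S.indicator (fun _ => (1:ℝ≥0∞)) x ∂μ :=
          (lintegral_indicator_one hSmeas).symm
      _ ≤ ∫⁻ x, (h x + h ((⇑T)^[k] x) + ENNReal.ofReal (δ / 8)) ∂μ := lintegral_mono hpt
      _ = (∫⁻ x, (h x + h ((⇑T)^[k] x)) ∂μ) + ENNReal.ofReal (δ / 8) := by
          rw [lintegral_add_right _ measurable_const, lintegral_const, measure_univ, mul_one]
      _ = (∫⁻ x, h x ∂μ) + (∫⁻ x, h ((⇑T)^[k] x) ∂μ) + ENNReal.ofReal (δ / 8) := by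
          rw [lintegral_add_left hmeas_h]
      _ ≤ ENNReal.ofReal (δ / 4) + ENNReal.ofReal (δ / 4) + ENNReal.ofReal (δ / 8) := by
          rw [hcomp]
          exact add_le_add (add_le_add hint hint) le_rfl
      _ = ENNReal.ofReal (5 * δ / 8) := by
          rw [← ENNReal.ofReal_add (by positivity) (by positivity),
            ← ENNReal.ofReal_add (by positivity) (by positivity)]
          congr 1; ring
  -- positivity of the good set
  have hsplit : μ (C m ∩ B) ≤ μ (C m ∩ B ∩ P) + μ S := by
    refine le_trans (measure_mono ?_) (measure_union_le _ _)
    intro x hx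
    by_cases hxP : x ∈ P
    · exact Or.inl ⟨hx, hxP⟩
    · exact Or.inr ⟨hx, hxP⟩
  have hpos : 0 < μ (C m ∩ B ∩ P) := by
    have h1 : ENNReal.ofReal δ ≤ μ (C m ∩ B ∩ P) + ENNReal.ofReal (5 * δ / 8) :=
      le_trans hm1 (le_trans hsplit (add_le_add_right hSμ _))
    have h2 : ENNReal.ofReal δ - ENNReal.ofReal (5 * δ / 8) ≤ μ (C m ∩ B ∩ P) :=
      tsub_le_iff_right.2 h1
    calc (0:ℝ≥0∞) < ENNReal.ofReal (3 * δ / 8) := ENNReal.ofReal_pos.2 (by linarith)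
      _ = ENNReal.ofReal (δ - 5 * δ / 8) := by congr 1; ring
      _ = ENNReal.ofReal δ - ENNReal.ofReal (5 * δ / 8) := ENNReal.ofReal_sub _ (by positivity)
      _ ≤ μ (C m ∩ B ∩ P) := h2
  refine ⟨(k : ℤ), ?_⟩
  refine lt_of_lt_of_le hpos (measure_mono ?_)
  intro x ⟨⟨hxC, hxB⟩, hxP⟩
  have hiter : iterZ T (k : ℤ) = (⇑T)^[k] := by
    rw [iterZ, if_pos (Int.natCast_nonneg k), Int.toNat_natCast]
  have hbirk : birkhoffZ T φ (k : ℤ) x = v m := by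
    rw [birkhoffZ, if_pos (Int.natCast_nonneg k), Int.toNat_natCast]
    exact hv m x hxC
  exact ⟨⟨hxB, by rw [hiter]; exact hxP⟩, by rw [Set.mem_setOf_eq, hbirk]; exact hm2⟩
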